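/- Existence of Kawashima compensators: Let m > n ≥ 1 be integers, let X ⊆ ℂ^m be a subspace with dim X = n, let Y = X^⊥, and let P_X, P_Y denote the orthogonal projections onto X and Y. Let A : ℂ^m → ℂ^m be Hermitian and satisfy the Kawashima condition relative to X. Then there exist a skew-adjoint linear map K : ℂ^m → ℂ^m (i.e., ⟨Ku, w⟩ = −⟨u, Kw⟩ for all u, w) and a constant C > 0 such that for every u ∈ ℂ^m, ‖P_X u‖² ≤ C ( Re⟨K A u, u⟩ + ‖P_Y u‖² ). -/

import Mathlib

set_option linter.unusedVariables false


noncomputable section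

namespace KawAux

open Finset
open scoped ComplexConjugate

local notation "⟪" x ", " y "⟫" => @inner ℂ _ _ x y

variable {E : Type*} [NormedAddCommGroup E] [InnerProductSpace ℂ E]
variable {ι : Type*} [Fintype ι]

noncomputable def Kmap (b : ι → E) (κ : ι → ι → ℂ) : E →ₗ[ℂ] E where
  toFun u := ∑ i, ∑ j, (κ i j * ⟪b j, u⟫) • b i
  map_add' u w := by
    simp [inner_add_right, mul_add, add_smul, Finset.sum_add_distrib]
  map_smul' c u := by
    simp [inner_smul_right, Finset.smul_sum, smul_smul, mul_left_comm]

lemma Kmap_apply (b : ι → E) (κ : ι → ι → ℂ) (u : E) :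
    Kmap b κ u = ∑ i, ∑ j, (κ i j * ⟪b j, u⟫) • b i := rfl

lemma Kmap_inner_left (b : ι → E) (κ : ι → ι → ℂ) (v w : E) :
    ⟪Kmap b κ v, w⟫ = ∑ i, ∑ j, conj (κ i j) * conj ⟪b j, v⟫ * ⟪b i, w⟫ := by
  rw [Kmap_apply, sum_inner]
  refine Finset.sum_congr rfl fun i _ => ?_
  rw [sum_inner]
  refine Finset.sum_congr rfl fun j _ => ?_
  rw [inner_smul_left, map_mul]

lemma Kmap_inner_right (b : ι → E) (κ : ι → ι → ℂ) (u w : E) :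
    ⟪u, Kmap b κ w⟫ = ∑ i, ∑ j, κ i j * ⟪b j, w⟫ * conj ⟪b i, u⟫ := by
  rw [Kmap_apply, inner_sum]
  refine Finset.sum_congr rfl fun i _ => ?_
  rw [inner_sum]
  refine Finset.sum_congr rfl fun j _ => ?_
  rw [inner_smul_right, show ⟪u, b i⟫ = conj ⟪b i, u⟫ from (inner_conj_symm u (b i)).symm]

lemma Kmap_skew (b : ι → E) (κ : ι → ι → ℂ) (hκ : ∀ i j, conj (κ i j) = -κ j i)
    (u w : E) : ⟪Kmap b κ u, w⟫ = -⟪u, Kmap b κ w⟫ := by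
  rw [Kmap_inner_left, Kmap_inner_right, Finset.sum_comm, ← Finset.sum_neg_distrib]
  refine Finset.sum_congr rfl fun j _ => ?_
  rw [← Finset.sum_neg_distrib]
  refine Finset.sum_congr rfl fun i _ => ?_
  rw [hκ]
  ring

/-- The compensator coefficients. -/
def kappa {n : ℕ} (μ : Fin n → ℝ) (p : Fin n → Fin n → ℂ) (i j : Fin n) : ℂ :=
  if μ i = μ j then 0 else p i j / ((μ j : ℂ) - (μ i : ℂ))

lemma kappa_conj {n : ℕ} (μ : Fin n → ℝ) (p : Fin n → Fin n → ℂ)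
    (hp : ∀ i j, conj (p i j) = p j i) (i j : Fin n) :
    conj (kappa μ p i j) = -kappa μ p j i := by
  unfold kappa
  by_cases h : μ i = μ j
  · rw [if_pos h, if_pos h.symm, map_zero, neg_zero]
  · have h' : ¬ μ j = μ i := fun hh => h hh.symm
    rw [if_neg h, if_neg h', map_div₀, hp, map_sub, Complex.conj_ofReal, Complex.conj_ofReal,
      show ((μ j : ℂ) - μ i) = -((μ i : ℂ) - μ j) by ring, div_neg]

lemma kappa_mul {n : ℕ} (μ : Fin n → ℝ) (p : Fin n → Fin n → ℂ) (i j : Fin n) :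
    kappa μ p i j * ((μ j : ℂ) - (μ i : ℂ)) = if μ i = μ j then 0 else p i j := by
  unfold kappa
  by_cases h : μ i = μ j
  · simp [h]
  · rw [if_neg h, if_neg h, div_mul_cancel₀]
    intro hc
    exact h (by exact_mod_cast (sub_eq_zero.mp hc).symm)

lemma inner_map_sum (b : ι → E) (s : Finset ι) (c : ι → ℂ) (P : E →ₗ[ℂ] E) :
    ⟪∑ i ∈ s, c i • b i, P (∑ j ∈ s, c j • b j)⟫
      = ∑ i ∈ s, ∑ j ∈ s, ⟪b i, P (b j)⟫ * (conj (c i) * c j) := by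
  rw [map_sum, sum_inner]
  refine Finset.sum_congr rfl fun i _ => ?_
  rw [inner_sum]
  refine Finset.sum_congr rfl fun j _ => ?_
  rw [map_smul, inner_smul_left, inner_smul_right]
  ring

lemma sum_repr' {n : ℕ} (b : OrthonormalBasis (Fin n) ℂ E) (u : E) :
    ∑ i, ⟪b i, u⟫ • b i = u := by
  simpa [b.repr_apply_apply] using b.sum_repr u

lemma inner_map_eq {n : ℕ} (b : OrthonormalBasis (Fin n) ℂ E) (P : E →ₗ[ℂ] E) (u : E) :
    ⟪u, P u⟫ = ∑ i, ∑ j, ⟪b i, P (b j)⟫ * (conj ⟪b i, u⟫ * ⟪b j, u⟫) := by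
  conv_lhs => rw [← sum_repr' b u]
  exact inner_map_sum b Finset.univ (fun i => ⟪b i, u⟫) P

lemma inner_basis_map {n : ℕ} (b : OrthonormalBasis (Fin n) ℂ E) (μ : Fin n → ℝ)
    (A : E →ₗ[ℂ] E) (hAb : ∀ i, A (b i) = (μ i : ℂ) • b i) (u : E) (j : Fin n) :
    ⟪b j, A u⟫ = (μ j : ℂ) * ⟪b j, u⟫ := by
  conv_lhs => rw [← sum_repr' b u]
  rw [map_sum, inner_sum]
  have hortho := orthonormal_iff_ite.mp b.orthonormal
  have h1 : ∀ i, ⟪b j, A (⟪b i, u⟫ • b i)⟫ = if i = j then (μ j : ℂ) * ⟪b j, u⟫ else 0 := by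
    intro i
    rw [map_smul, inner_smul_right, hAb, inner_smul_right, hortho]
    by_cases h : i = j
    · subst h; rw [if_pos rfl, if_pos rfl]; ring
    · rw [if_neg (show ¬ j = i from fun hh => h hh.symm), if_neg h]; ring
  rw [Finset.sum_congr rfl fun i _ => h1 i, Finset.sum_ite_eq' Finset.univ j]
  simp

lemma main_identity {n : ℕ} (b : OrthonormalBasis (Fin n) ℂ E) (μ : Fin n → ℝ)
    (A P : E →ₗ[ℂ] E) (hAb : ∀ i, A (b i) = (μ i : ℂ) • b i)
    (hp : ∀ i j : Fin n, conj ⟪b i, P (b j)⟫ = ⟪b j, P (b i)⟫) (u : E) :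
    ⟪Kmap b (kappa μ fun i j => ⟪b i, P (b j)⟫) (A u), u⟫ +
      conj ⟪Kmap b (kappa μ fun i j => ⟪b i, P (b j)⟫) (A u), u⟫ =
    ⟪u, P u⟫ -
      ∑ i, ∑ j, (if μ i = μ j then ⟪b i, P (b j)⟫ * (conj ⟪b i, u⟫ * ⟪b j, u⟫) else 0) := by
  set p : Fin n → Fin n → ℂ := fun i j => ⟪b i, P (b j)⟫ with hpdef
  set κ : Fin n → Fin n → ℂ := kappa μ p with hκdef
  have hbA : ∀ j, ⟪b j, A u⟫ = (μ j : ℂ) * ⟪b j, u⟫ := inner_basis_map b μ A hAb u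
  have hz1 : ⟪Kmap b κ (A u), u⟫ = ∑ i, ∑ j, conj (κ i j) * conj ⟪b j, A u⟫ * ⟪b i, u⟫ :=
    Kmap_inner_left b κ (A u) u
  have hz1' : ⟪Kmap b κ (A u), u⟫ = ∑ i, ∑ j, conj (κ j i) * conj ⟪b i, A u⟫ * ⟪b j, u⟫ :=
    hz1.trans Finset.sum_comm
  have hz2 : conj ⟪Kmap b κ (A u), u⟫ = ∑ i, ∑ j, κ i j * ⟪b j, A u⟫ * conj ⟪b i, u⟫ := by
    rw [hz1, map_sum]
    refine Finset.sum_congr rfl fun i _ => ?_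
    rw [map_sum]
    refine Finset.sum_congr rfl fun j _ => ?_
    simp only [map_mul, Complex.conj_conj]
  have key : ∀ i j : Fin n, conj (κ j i) * conj ⟪b i, A u⟫ * ⟪b j, u⟫
      + κ i j * ⟪b j, A u⟫ * conj ⟪b i, u⟫
      = (if μ i = μ j then 0 else p i j) * (conj ⟪b i, u⟫ * ⟪b j, u⟫) := by
    intro i j
    have hconj : conj (κ j i) = -κ i j := kappa_conj μ p hp j i
    have hmul : κ i j * ((μ j : ℂ) - (μ i : ℂ)) = if μ i = μ j then 0 else p i j :=
      kappa_mul μ p i j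
    rw [hbA i, hbA j, hconj, map_mul, Complex.conj_ofReal, ← hmul]
    ring
  have hL : ⟪Kmap b κ (A u), u⟫ + conj ⟪Kmap b κ (A u), u⟫
      = ∑ i, ∑ j, (if μ i = μ j then 0 else p i j) * (conj ⟪b i, u⟫ * ⟪b j, u⟫) := by
    rw [hz2, hz1', ← Finset.sum_add_distrib]
    refine Finset.sum_congr rfl fun i _ => ?_
    rw [← Finset.sum_add_distrib]
    exact Finset.sum_congr rfl fun j _ => key i j
  have hR : ⟪u, P u⟫ -
      ∑ i, ∑ j, (if μ i = μ j then p i j * (conj ⟪b i, u⟫ * ⟪b j, u⟫) else 0)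
      = ∑ i, ∑ j, (if μ i = μ j then 0 else p i j) * (conj ⟪b i, u⟫ * ⟪b j, u⟫) := by
    rw [inner_map_eq b P u, ← Finset.sum_sub_distrib]
    refine Finset.sum_congr rfl fun i _ => ?_
    rw [← Finset.sum_sub_distrib]
    refine Finset.sum_congr rfl fun j _ => ?_
    by_cases h : μ i = μ j
    · simp [h, hpdef]
    · simp [h, hpdef]
  exact hL.trans hR.symm

lemma sum_ite_fiber {n : ℕ} (μ : Fin n → ℝ) (f : Fin n → Fin n → ℂ) :
    ∑ i, ∑ j, (if μ i = μ j then f i j else 0)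
      = ∑ t ∈ Finset.univ.image μ, ∑ i ∈ Finset.univ.filter (fun i => μ i = t),
          ∑ j ∈ Finset.univ.filter (fun j => μ j = t), f i j := by
  rw [← Finset.sum_fiberwise_of_maps_to (fun i _ => Finset.mem_image_of_mem μ (Finset.mem_univ i))
      (fun i => ∑ j, if μ i = μ j then f i j else 0)]
  refine (Finset.sum_congr rfl fun t ht => Finset.sum_congr rfl fun i hi => ?_).symm
  have hit : μ i = t := (Finset.mem_filter.mp hi).2
  subst hit
  rw [Finset.sum_filter]
  refine Finset.sum_congr rfl fun j _ => ?_
  by_cases h : μ i = μ j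
  · rw [if_pos h, if_pos h.symm]
  · rw [if_neg h, if_neg (fun hh => h hh.symm)]

lemma re_inner_self (w : E) : (⟪w, w⟫).re = ‖w‖ ^ 2 := by
  have h := @inner_self_eq_norm_sq ℂ _ _ _ _ w
  simpa using h

theorem exists_K [FiniteDimensional ℂ E] (X : Submodule ℂ E) (A : E →ₗ[ℂ] E)
    (hA : A.IsSymmetric)
    (hKaw : ∀ x ∈ X, ∀ c : ℂ, A x = c • x → x = 0) :
    ∃ K : E →ₗ[ℂ] E,
      (∀ u w : E, ⟪K u, w⟫ = -⟪u, K w⟫) ∧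
      (∀ x, x ∈ X → x ≠ 0 → 0 < (⟪K (A x), x⟫).re) := by
  classical
  have hdim : Module.finrank ℂ E = Module.finrank ℂ E := rfl
  set b : OrthonormalBasis (Fin (Module.finrank ℂ E)) ℂ E := hA.eigenvectorBasis hdim with hbdef
  set μ : Fin (Module.finrank ℂ E) → ℝ := hA.eigenvalues hdim with hμdef
  have hAb : ∀ i, A (b i) = (μ i : ℂ) • b i := fun i => hA.apply_eigenvectorBasis hdim i
  set P : E →ₗ[ℂ] E := X.subtype.comp (X.orthogonalProjectionOnto).toLinearMap with hPdef
  have hPapp : ∀ u, P u = (X.orthogonalProjectionOnto u : E) := fun _ => rfl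
  have hPsym : ∀ u w : E, ⟪P u, w⟫ = ⟪u, P w⟫ := fun u w =>
    X.inner_starProjection_left_eq_right u w
  have hp : ∀ i j, conj ⟪b i, P (b j)⟫ = ⟪b j, P (b i)⟫ := fun i j => by
    rw [inner_conj_symm (P (b j)) (b i), hPsym]
  set κ : _ → _ → ℂ := kappa μ fun i j => ⟪b i, P (b j)⟫ with hκdef
  refine ⟨Kmap b κ, Kmap_skew b κ (kappa_conj μ _ hp), ?_⟩
  intro x hxX hxne
  set T := Finset.univ.image μ with hT
  set v : ℝ → E := fun t => ∑ i ∈ Finset.univ.filter (fun i => μ i = t), ⟪b i, x⟫ • b i with hv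
  have hz := main_identity b μ A P hAb hp x
  have hgroupQ : ∀ Q : E →ₗ[ℂ] E,
      (∑ i, ∑ j, (if μ i = μ j then ⟪b i, Q (b j)⟫ * (conj ⟪b i, x⟫ * ⟪b j, x⟫) else 0))
        = ∑ t ∈ T, ⟪v t, Q (v t)⟫ := by
    intro Q
    rw [sum_ite_fiber μ fun i j => ⟪b i, Q (b j)⟫ * (conj ⟪b i, x⟫ * ⟪b j, x⟫)]
    refine Finset.sum_congr rfl fun t ht => ?_
    simp only [hv]
    exact (inner_map_sum b _ _ Q).symm
  have hortho := orthonormal_iff_ite.mp b.orthonormal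
  have hid : (∑ i, ∑ j, (if μ i = μ j then
        ⟪b i, (LinearMap.id : E →ₗ[ℂ] E) (b j)⟫ * (conj ⟪b i, x⟫ * ⟪b j, x⟫) else 0))
      = ⟪x, x⟫ := by
    have h2 : ∀ i j, (if μ i = μ j then
        ⟪b i, (LinearMap.id : E →ₗ[ℂ] E) (b j)⟫ * (conj ⟪b i, x⟫ * ⟪b j, x⟫) else 0)
        = ⟪b i, (LinearMap.id : E →ₗ[ℂ] E) (b j)⟫ * (conj ⟪b i, x⟫ * ⟪b j, x⟫) := by
      intro i j
      by_cases h : μ i = μ j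
      · rw [if_pos h]
      · rw [if_neg h, LinearMap.id_apply, hortho,
          if_neg (fun hh : i = j => h (by rw [hh])), zero_mul]
    rw [Finset.sum_congr rfl fun i _ => Finset.sum_congr rfl fun j _ => h2 i j,
      ← inner_map_eq b LinearMap.id x, LinearMap.id_apply]
  have hnormsum : ∑ t ∈ T, ⟪v t, v t⟫ = ⟪x, x⟫ := by
    have h3 := (hgroupQ LinearMap.id).symm.trans hid
    simpa using h3
  have hAv : ∀ t : ℝ, A (v t) = (t : ℂ) • v t := by
    intro t
    simp only [hv]
    rw [map_sum, Finset.smul_sum]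
    refine Finset.sum_congr rfl fun i hi => ?_
    have hit : μ i = t := (Finset.mem_filter.mp hi).2
    rw [map_smul, hAb i, smul_smul, smul_smul, hit, mul_comm]
  have hpart : ∑ t ∈ T, v t = x := by
    simp only [hv, hT]
    rw [Finset.sum_fiberwise_of_maps_to (fun i _ => Finset.mem_image_of_mem μ (Finset.mem_univ i))
      (fun i => ⟪b i, x⟫ • b i)]
    exact sum_repr' b x
  have hPx : P x = x := by
    rw [hPapp]
    exact X.starProjection_eq_self_iff.mpr hxX
  have hPest : ∀ w : E, (⟪w, P w⟫).re ≤ ‖w‖ ^ 2 ∧ ((⟪w, P w⟫).re = ‖w‖ ^ 2 → w ∈ X) := by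
    intro w
    have hPP : P (P w) = P w := by
      rw [hPapp w]
      exact congrArg Subtype.val (X.orthogonalProjectionOnto_mem_subspace_eq_self (X.orthogonalProjectionOnto w))
    have hre : (⟪w, P w⟫).re = ‖P w‖ ^ 2 := by
      calc (⟪w, P w⟫).re = (⟪w, P (P w)⟫).re := by rw [hPP]
        _ = (⟪P w, P w⟫).re := by rw [← hPsym w (P w)]
        _ = ‖P w‖ ^ 2 := re_inner_self (P w)
    have hpyth : ‖w‖ ^ 2 = ‖P w‖ ^ 2 + ‖(Xᗮ.orthogonalProjectionOnto w : E)‖ ^ 2 := by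
      have h4 := Submodule.norm_sq_eq_add_norm_sq_projection w X
      rw [hPapp]
      simpa using h4
    constructor
    · nlinarith [sq_nonneg ‖(Xᗮ.orthogonalProjectionOnto w : E)‖]
    · intro heq
      have hy : ‖(Xᗮ.orthogonalProjectionOnto w : E)‖ = 0 := by nlinarith
      have hy0 : (Xᗮ.orthogonalProjectionOnto w : E) = 0 := norm_eq_zero.mp hy
      have h5 : (X.orthogonalProjectionOnto w : E) + (Xᗮ.orthogonalProjectionOnto w : E) = w :=
          X.starProjection_add_starProjection_orthogonal w
      rw [hy0, add_zero] at h5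
      rw [← h5]
      exact Submodule.coe_mem _
  have hz' : ⟪Kmap b κ (A x), x⟫ + conj ⟪Kmap b κ (A x), x⟫
      = ⟪x, x⟫ - ∑ t ∈ T, ⟪v t, P (v t)⟫ := by
    rw [hz, hgroupQ P, hPx]
  have hre2 : 2 * (⟪Kmap b κ (A x), x⟫).re
      = ∑ t ∈ T, ((⟪v t, v t⟫).re - (⟪v t, P (v t)⟫).re) := by
    have h1 := congrArg Complex.re hz'
    rw [Complex.add_re, Complex.conj_re, Complex.sub_re, Complex.re_sum] at h1
    have h2 : (⟪x, x⟫ : ℂ).re = ∑ t ∈ T, (⟪v t, v t⟫).re := by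
      rw [← hnormsum, Complex.re_sum]
    rw [h2] at h1
    rw [Finset.sum_sub_distrib]
    linarith
  have hterm : ∀ t ∈ T, 0 ≤ (⟪v t, v t⟫).re - (⟪v t, P (v t)⟫).re := by
    intro t _
    have h1 := (hPest (v t)).1
    have h2 : (⟪v t, v t⟫ : ℂ).re = ‖v t‖ ^ 2 := re_inner_self (v t)
    linarith
  have hex : ∃ t ∈ T, 0 < (⟪v t, v t⟫).re - (⟪v t, P (v t)⟫).re := by
    by_contra hcon
    push_neg at hcon
    have hall : ∀ t ∈ T, v t = 0 := by
      intro t ht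
      have h0 : (⟪v t, P (v t)⟫ : ℂ).re = ‖v t‖ ^ 2 := by
        have ha := hcon t ht
        have hb := hterm t ht
        have hc := re_inner_self (v t)
        linarith
      exact hKaw (v t) ((hPest (v t)).2 h0) (t : ℂ) (hAv t)
    exact hxne (by rw [← hpart]; exact Finset.sum_eq_zero hall)
  have hpos : 0 < ∑ t ∈ T, ((⟪v t, v t⟫).re - (⟪v t, P (v t)⟫).re) :=
    Finset.sum_pos' hterm hex
  linarith

theorem estimate [FiniteDimensional ℂ E] (X : Submodule ℂ E) (hX : X ≠ ⊥)
    (B : E →ₗ[ℂ] E)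
    (hpos : ∀ x, x ∈ X → x ≠ 0 → 0 < (⟪B x, x⟫).re) :
    ∃ ε > (0:ℝ), ∃ C > (0 : ℝ), ∀ u : E,
      ‖(X.orthogonalProjectionOnto u : E)‖ ^ 2 ≤
        C * (ε * (⟪B u, u⟫).re + ‖(Xᗮ.orthogonalProjectionOnto u : E)‖ ^ 2) := by
  classical
  set q : E → ℝ := fun u => (⟪B u, u⟫).re with hq
  have hBcont : Continuous fun u : E => B u := B.continuous_of_finiteDimensional
  have hqc : Continuous q := by
    have h1 : Continuous fun u : E => (⟪B u, u⟫ : ℂ) := hBcont.inner continuous_id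
    exact Complex.continuous_re.comp h1
  set S : Set E := {x : E | x ∈ X ∧ ‖x‖ = 1} with hS
  have hScl : IsClosed S := by
    have h1 : IsClosed (X : Set E) := Submodule.closed_of_finiteDimensional X
    have h2 : S = (X : Set E) ∩ Metric.sphere 0 1 := by
      ext y
      simp [hS, Metric.mem_sphere, dist_zero_right]
    rw [h2]
    exact h1.inter Metric.isClosed_sphere
  have hScpt : IsCompact S := by
    apply Metric.isCompact_of_isClosed_isBounded hScl
    have hsub : S ⊆ Metric.closedBall 0 1 := fun y hy => by
      simp [Metric.mem_closedBall, dist_zero_right, hy.2.le]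
    exact Metric.isBounded_closedBall.subset hsub
  have hSne : S.Nonempty := by
    obtain ⟨x, hxX, hxne⟩ := Submodule.exists_mem_ne_zero_of_ne_bot hX
    have hxn : ‖x‖ ≠ 0 := norm_ne_zero_iff.mpr hxne
    refine ⟨((‖x‖ : ℂ))⁻¹ • x, X.smul_mem _ hxX, ?_⟩
    rw [norm_smul, norm_inv]
    simp [hxn]
  obtain ⟨x₀, hx₀S, hx₀min⟩ := hScpt.exists_isMinOn hSne hqc.continuousOn
  set δ := q x₀ with hδdef
  have hx₀ne : x₀ ≠ 0 := by
    intro h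
    have h2 := hx₀S.2
    rw [h, norm_zero] at h2
    norm_num at h2
  have hδ : 0 < δ := hpos x₀ hx₀S.1 hx₀ne
  set Bc := LinearMap.toContinuousLinearMap B with hBc2
  set M := ‖Bc‖ with hM
  have hM0 : 0 ≤ M := norm_nonneg _
  have hBw : ∀ w : E, ‖B w‖ ≤ M * ‖w‖ := by
    intro w
    have h := Bc.le_opNorm w
    have hcoe : Bc w = B w := by
      rw [hBc2]
      exact congrFun (LinearMap.coe_toContinuousLinearMap' B) w
    rwa [hcoe] at h
  have hip : ∀ x y : E, |(⟪B x, y⟫).re| ≤ M * ‖x‖ * ‖y‖ := by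
    intro x y
    have h1 : |(⟪B x, y⟫).re| ≤ ‖(⟪B x, y⟫ : ℂ)‖ := Complex.abs_re_le_norm _
    have h2 : ‖(⟪B x, y⟫ : ℂ)‖ ≤ ‖B x‖ * ‖y‖ := norm_inner_le_norm _ _
    have h3 := hBw x
    nlinarith [norm_nonneg y, norm_nonneg (B x), norm_nonneg x]
  have hcross : ∀ x y : E, q x - 2 * M * ‖x‖ * ‖y‖ - M * ‖y‖ ^ 2 ≤ q (x + y) := by
    intro x y
    have hsplit : q (x + y) = q x + (⟪B x, y⟫).re + (⟪B y, x⟫).re + q y := by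
      simp only [hq, map_add, inner_add_left, inner_add_right, Complex.add_re]
      ring
    have e1 := abs_le.mp (hip x y)
    have e2 := abs_le.mp (hip y x)
    have e3 : |q y| ≤ M * ‖y‖ ^ 2 := by
      have h := hip y y
      simp only [hq]
      linarith
    have e3' := abs_le.mp e3
    rw [hsplit]
    nlinarith [norm_nonneg x, norm_nonneg y]
  have hhom : ∀ (c : ℝ) (w : E), q ((c : ℂ) • w) = c ^ 2 * q w := by
    intro c w
    simp only [hq, map_smul, inner_smul_left, inner_smul_right, Complex.conj_ofReal]
    rw [← mul_assoc, ← Complex.ofReal_mul, Complex.re_ofReal_mul]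
    ring
  have hqX : ∀ x, x ∈ X → δ * ‖x‖ ^ 2 ≤ q x := by
    intro x hxX
    rcases eq_or_ne x 0 with h | h
    · simp [h, hq]
    · have hxn : ‖x‖ ≠ 0 := norm_ne_zero_iff.mpr h
      set x' : E := ((‖x‖ : ℂ))⁻¹ • x with hx'
      have hx'mem : x' ∈ X := X.smul_mem _ hxX
      have hx'norm : ‖x'‖ = 1 := by
        rw [hx', norm_smul, norm_inv]
        simp [hxn]
      have h1 : δ ≤ q x' := hx₀min ⟨hx'mem, hx'norm⟩
      have h2 : x = ((‖x‖ : ℂ)) • x' := by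
        rw [hx', smul_smul, mul_inv_cancel₀ (by exact_mod_cast hxn), one_smul]
      have h3 : q x = ‖x‖ ^ 2 * q x' := by
        conv_lhs => rw [h2]
        exact hhom ‖x‖ x'
      nlinarith [sq_nonneg ‖x‖]
  set S2 : ℝ := 2 * M ^ 2 + M * δ + δ with hS2
  have hS2pos : 0 < S2 := by nlinarith
  refine ⟨δ / S2, div_pos hδ hS2pos, 2 * S2 / δ ^ 2, by positivity, ?_⟩
  intro u
  set a := ‖(X.orthogonalProjectionOnto u : E)‖ with ha
  set c := ‖(Xᗮ.orthogonalProjectionOnto u : E)‖ with hc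
  have ha0 : 0 ≤ a := norm_nonneg _
  have hc0 : 0 ≤ c := norm_nonneg _
  have hdecomp : (X.orthogonalProjectionOnto u : E) + (Xᗮ.orthogonalProjectionOnto u : E) = u :=
    X.starProjection_add_starProjection_orthogonal u
  have hqlow : δ * a ^ 2 - 2 * M * a * c - M * c ^ 2 ≤ q u := by
    have h1 := hcross (X.orthogonalProjectionOnto u : E) (Xᗮ.orthogonalProjectionOnto u : E)
    rw [hdecomp] at h1
    have h2 := hqX _ (Submodule.coe_mem (X.orthogonalProjectionOnto u))
    linarith
  have hkey : δ ^ 2 * a ^ 2 ≤ 2 * δ * q u + 2 * S2 * c ^ 2 := by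
    nlinarith [sq_nonneg (δ * a - 2 * M * c), mul_le_mul_of_nonneg_left hqlow
      (by linarith : (0:ℝ) ≤ 2 * δ), mul_nonneg hc0 hc0]
  have hrw : (2 * S2 / δ ^ 2) * ((δ / S2) * q u + c ^ 2)
      = (2 * δ * q u + 2 * S2 * c ^ 2) / δ ^ 2 := by
    field_simp
  rw [hrw, le_div_iff₀ (by positivity : (0:ℝ) < δ ^ 2)]
  linarith

end KawAux


/-- **Existence of Kawashima compensators.**
Let `X ⊆ ℂ^m` be an `n`-dimensional subspace (`1 ≤ n < m`), `Y = Xᗮ`, and let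
`A` be a Hermitian linear map satisfying the Kawashima condition relative to `X`
(no nonzero eigenvector of `A` lies in `X`).  Then there is a skew-adjoint `K`
and `C > 0` with `‖P_X u‖² ≤ C (Re⟨KAu, u⟩ + ‖P_Y u‖²)` for all `u`. -/
theorem kawashima_compensator_exists
    (m n : ℕ) (hn : 1 ≤ n) (hnm : n < m)
    (X : Submodule ℂ (EuclideanSpace ℂ (Fin m)))
    (hX : Module.finrank ℂ X = n)
    (A : Module.End ℂ (EuclideanSpace ℂ (Fin m)))
    (hA : ∀ u w : EuclideanSpace ℂ (Fin m), (inner ℂ (A u) w : ℂ) = inner ℂ u (A w))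
    (hKaw : ∀ x ∈ X, ∀ c : ℂ, A x = c • x → x = 0) :
    ∃ K : Module.End ℂ (EuclideanSpace ℂ (Fin m)),
      (∀ u w : EuclideanSpace ℂ (Fin m), (inner ℂ (K u) w : ℂ) = -inner ℂ u (K w)) ∧
      ∃ C > (0 : ℝ), ∀ u : EuclideanSpace ℂ (Fin m),
        ‖(X.orthogonalProjectionOnto u : EuclideanSpace ℂ (Fin m))‖ ^ 2 ≤
          C * ((inner ℂ (K (A u)) u : ℂ).re +
            ‖(Xᗮ.orthogonalProjectionOnto u : EuclideanSpace ℂ (Fin m))‖ ^ 2) := by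
  have hA' : A.IsSymmetric := fun u w => hA u w
  obtain ⟨K₀, hskew, hpos⟩ := KawAux.exists_K X A hA' hKaw
  have hXne : X ≠ ⊥ := by
    intro h
    rw [h, finrank_bot] at hX
    omega
  obtain ⟨ε, hε, C, hC, hest⟩ := KawAux.estimate X hXne (K₀ ∘ₗ A)
    (fun x hx hne => hpos x hx hne)
  refine ⟨(ε : ℂ) • K₀, ?_, C, hC, ?_⟩
  · intro u w
    have h := hskew u w
    simp only [LinearMap.smul_apply, inner_smul_left, inner_smul_right, Complex.conj_ofReal, h]
    ring
  · intro u
    have h := hest u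
    have hre : (inner ℂ (((ε : ℂ) • K₀) (A u)) u : ℂ).re
        = ε * ((inner ℂ ((K₀ ∘ₗ A) u) u : ℂ)).re := by
      simp only [LinearMap.smul_apply, inner_smul_left, Complex.conj_ofReal,
        LinearMap.comp_apply]
      exact Complex.re_ofReal_mul _ _
    rw [hre]
    exact h
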